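/- For a continuous map f on a compact metric space and any m ≥ 1, h_pol(f^m) = h_pol(f). -/
import Mathlib


open Set Filter Metric

/-- The dynamical metric `d_n^f(x,y) = max_{0 ≤ k ≤ n-1} d(f^k x, f^k y)`. -/
noncomputable def dynDist {X : Type*} [PseudoMetricSpace X] (f : X → X) (n : ℕ) (x y : X) : ℝ :=
  (((Finset.range n).sup fun k => nndist (f^[k] x) (f^[k] y)) : NNReal)

/-- `G_n^f(ε)`: the minimal number of `d_n^f`-balls of radius `ε` covering the space. -/
noncomputable def coverNum {X : Type*} [PseudoMetricSpace X] (f : X → X) (n : ℕ) (ε : ℝ) : ℕ :=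
  sInf {m : ℕ | ∃ s : Finset X, s.card = m ∧ ∀ x : X, ∃ c ∈ s, dynDist f n c x < ε}

/-- The strong polynomial entropy `h_pol(f) = sup_{ε>0} limsup_n log G_n^f(ε) / log n`. -/
noncomputable def hpol {X : Type*} [PseudoMetricSpace X] (f : X → X) : ENNReal :=
  ⨆ ε : {e : ℝ // 0 < e},
    Filter.limsup
      (fun n : ℕ => ENNReal.ofReal (Real.log (coverNum f n (ε : ℝ)) / Real.log n))
      Filter.atTop

/-- A covering of `X` by dynamical balls `B_{n_i}^f(x_i, ε)` with all orders `n_i ≥ N`. -/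
def IsDynCover {X : Type*} [PseudoMetricSpace X] (f : X → X) (ε : ℝ) (N : ℕ)
    (C : Set (X × ℕ)) : Prop :=
  (∀ p ∈ C, N ≤ p.2) ∧ ∀ x : X, ∃ p ∈ C, dynDist f p.2 p.1 x < ε

/-- The weight `M(C,s) = Σ_i n_i^{-s}` of a covering by dynamical balls. -/
noncomputable def covWeight {X : Type*} (C : Set (X × ℕ)) (s : ℝ) : ENNReal :=
  ∑' p : C, ((p : X × ℕ).2 : ENNReal) ^ (-s)

/-- `Δ^f(ε,s) = sup_{N ≥ 1} inf { M(C,s) | C a covering by dynamical balls of orders ≥ N }`. -/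
noncomputable def dynDelta {X : Type*} [PseudoMetricSpace X] (f : X → X) (ε s : ℝ) : ENNReal :=
  ⨆ N : ℕ, ⨅ C : {C : Set (X × ℕ) // IsDynCover f ε (N + 1) C}, covWeight (C : Set (X × ℕ)) s

/-- The critical exponent `s_c^f(ε)`, i.e. the supremum of the `s ≥ 0` with `Δ^f(ε,s) = ∞`. -/
noncomputable def scrit {X : Type*} [PseudoMetricSpace X] (f : X → X) (ε : ℝ) : ENNReal :=
  sSup {x : ENNReal | ∃ s : ℝ, 0 ≤ s ∧ x = ENNReal.ofReal s ∧ dynDelta f ε s = ⊤}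

/-- The weak polynomial entropy `h_pol^*(f) = sup_{ε>0} s_c^f(ε)`. -/
noncomputable def hpolStar {X : Type*} [PseudoMetricSpace X] (f : X → X) : ENNReal :=
  ⨆ ε : {e : ℝ // 0 < e}, scrit f (ε : ℝ)

lemma log_nat_nonneg (n : ℕ) : 0 ≤ Real.log n := by
  rcases Nat.eq_zero_or_pos n with h | h
  · simp [h]
  · exact Real.log_nonneg (by exact_mod_cast h)

lemma log_nat_mono {a b : ℕ} (h : a ≤ b) : Real.log a ≤ Real.log b := by
  rcases Nat.eq_zero_or_pos a with h0 | h0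
  · simpa [h0] using log_nat_nonneg b
  · exact Real.log_le_log (by exact_mod_cast h0) (by exact_mod_cast h)

lemma dynDist_lt_iff {X : Type*} [PseudoMetricSpace X] (f : X → X) (n : ℕ) (x y : X) {ε : ℝ}
    (hε : 0 < ε) :
    dynDist f n x y < ε ↔ ∀ k < n, dist (f^[k] x) (f^[k] y) < ε := by
  unfold dynDist
  rw [show ε = ((ε.toNNReal : NNReal) : ℝ) from (Real.coe_toNNReal _ hε.le).symm,
    NNReal.coe_lt_coe, Finset.sup_lt_iff (by simpa using Real.toNNReal_pos.mpr hε)]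
  simp only [Finset.mem_range]
  constructor
  · intro h k hk
    have := h k hk
    rw [← NNReal.coe_lt_coe] at this
    simpa [Real.coe_toNNReal _ hε.le] using this
  · intro h k hk
    have := h k hk
    rw [← NNReal.coe_lt_coe]
    simpa [Real.coe_toNNReal _ hε.le] using this

lemma dynDist_mono_n {X : Type*} [PseudoMetricSpace X] (f : X → X) {n n' : ℕ} (h : n ≤ n')
    (x y : X) : dynDist f n x y ≤ dynDist f n' x y := by
  unfold dynDist
  rw [NNReal.coe_le_coe]
  exact Finset.sup_mono (Finset.range_subset_range.mpr h)

lemma dynDist_iterate_le {X : Type*} [PseudoMetricSpace X] (f : X → X) (m n : ℕ) (hm : 1 ≤ m)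
    (x y : X) : dynDist (f^[m]) n x y ≤ dynDist f (m * n) x y := by
  unfold dynDist
  rw [NNReal.coe_le_coe]
  apply Finset.sup_le
  intro k hk
  rw [Finset.mem_range] at hk
  have hmem : m * k ∈ Finset.range (m * n) :=
    Finset.mem_range.mpr (by calc m * k < m * n := by exact Nat.mul_lt_mul_of_le_of_lt (le_refl m) hk (by omega))
  have := Finset.le_sup (f := fun k => nndist (f^[k] x) (f^[k] y)) hmem
  simpa [Function.iterate_mul] using this

lemma coverSet_nonempty {X : Type*} [MetricSpace X] [CompactSpace X] (f : X → X)
    (hf : Continuous f) (n : ℕ) {ε : ℝ} (hε : 0 < ε) :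
    {m : ℕ | ∃ s : Finset X, s.card = m ∧ ∀ x : X, ∃ c ∈ s, dynDist f n c x < ε}.Nonempty := by
  have hU : ∀ x : X, IsOpen {y | dynDist f n x y < ε} := by
    intro x
    have : {y | dynDist f n x y < ε} = ⋂ k ∈ Finset.range n, (f^[k]) ⁻¹' (ball (f^[k] x) ε) := by
      ext y
      simp [dynDist_lt_iff f n x y hε, Finset.mem_range, mem_ball, dist_comm]
    rw [this]
    exact isOpen_biInter_finset fun k _ => ((hf.iterate k).isOpen_preimage _ isOpen_ball)
  have hcov : (univ : Set X) ⊆ ⋃ x : X, {y | dynDist f n x y < ε} := by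
    intro x _
    refine mem_iUnion.mpr ⟨x, ?_⟩
    have : dynDist f n x x = 0 := by
      unfold dynDist
      norm_cast
      simp [nndist_self]
    simpa [this] using hε
  obtain ⟨t, ht⟩ := isCompact_univ.elim_finite_subcover _ hU hcov
  refine ⟨t.card, t, rfl, fun x => ?_⟩
  have := ht (mem_univ x)
  simpa using this

lemma coverNum_le_of_imp {X : Type*} [PseudoMetricSpace X] (f g : X → X) (n n' : ℕ) (ε δ : ℝ)
    (h : ∀ c x, dynDist g n' c x < δ → dynDist f n c x < ε)
    (hne : {m : ℕ | ∃ s : Finset X, s.card = m ∧ ∀ x : X, ∃ c ∈ s, dynDist g n' c x < δ}.Nonempty) :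
    coverNum f n ε ≤ coverNum g n' δ := by
  have hmem := Nat.sInf_mem hne
  obtain ⟨s, hs, hcov⟩ := hmem
  exact Nat.sInf_le ⟨s, hs, fun x => by
    obtain ⟨c, hc, hd⟩ := hcov x
    exact ⟨c, hc, h c x hd⟩⟩

lemma exists_delta {X : Type*} [MetricSpace X] [CompactSpace X] (f : X → X) (hf : Continuous f)
    (m : ℕ) {ε : ℝ} (hε : 0 < ε) :
    ∃ δ > 0, ∀ x y : X, dist x y < δ → ∀ j < m, dist (f^[j] x) (f^[j] y) < ε := by
  induction m with
  | zero => exact ⟨1, one_pos, fun x y _ j hj => absurd hj (Nat.not_lt_zero j)⟩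
  | succ k ih =>
    obtain ⟨δ₁, hδ₁, h₁⟩ := ih
    have huc : UniformContinuous (f^[k]) :=
      CompactSpace.uniformContinuous_of_continuous (hf.iterate k)
    obtain ⟨δ₂, hδ₂, h₂⟩ := Metric.uniformContinuous_iff.mp huc ε hε
    refine ⟨min δ₁ δ₂, lt_min hδ₁ hδ₂, fun x y hd j hj => ?_⟩
    rcases Nat.lt_succ_iff_lt_or_eq.mp hj with hj' | rfl
    · exact h₁ x y (hd.trans_le (min_le_left _ _)) j hj'
    · exact h₂ (hd.trans_le (min_le_right _ _))

lemma dynDist_iter_control {X : Type*} [MetricSpace X] (f : X → X) (m : ℕ) (hm : 1 ≤ m)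
    {ε δ : ℝ} (hε : 0 < ε) (hδ : 0 < δ)
    (hcontrol : ∀ x y : X, dist x y < δ → ∀ j < m, dist (f^[j] x) (f^[j] y) < ε)
    (n : ℕ) (c x : X) (h : dynDist (f^[m]) n c x < δ) : dynDist f (m * n) c x < ε := by
  rw [dynDist_lt_iff _ _ _ _ hδ] at h
  rw [dynDist_lt_iff _ _ _ _ hε]
  intro j hj
  have hq : j / m < n := Nat.div_lt_of_lt_mul (by omega)
  have hbase := h (j / m) hq
  simp only [← Function.iterate_mul] at hbase
  have hr : j % m < m := Nat.mod_lt j (by omega)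
  have := hcontrol _ _ hbase (j % m) hr
  have hrw : ∀ z : X, f^[j % m] (f^[m * (j / m)] z) = f^[j] z := by
    intro z
    rw [← Function.iterate_add_apply]
    rw [Nat.mod_add_div]
  rwa [hrw, hrw] at this

lemma div_log_mono {a b : ℕ} (n : ℕ) (h : a ≤ b) :
    Real.log a / Real.log n ≤ Real.log b / Real.log n := by
  rcases (log_nat_nonneg n).eq_or_lt with h0 | h0
  · rw [← h0]; simp
  · exact div_le_div_of_nonneg_right (log_nat_mono h) h0.le

lemma hpol_le_iterate {X : Type*} [MetricSpace X] [CompactSpace X] (f : X → X)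
    (hf : Continuous f) (m : ℕ) (hm : 1 ≤ m) : hpol f ≤ hpol (f^[m]) := by
  rw [hpol, hpol]
  apply iSup_le
  rintro ⟨ε, hε⟩
  obtain ⟨δ, hδ0, hδ⟩ := exists_delta f hf m hε
  refine le_trans ?_ (le_iSup _ (⟨δ, hδ0⟩ : {e : ℝ // 0 < e}))
  refine Filter.limsup_le_limsup (Eventually.of_forall fun n => ?_) (by isBoundedDefault)
    (by isBoundedDefault)
  apply ENNReal.ofReal_le_ofReal
  apply div_log_mono
  -- coverNum f n ε ≤ coverNum (f^[m]) n δ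
  apply coverNum_le_of_imp
  · intro c x hd
    have h1 : dynDist f (m * n) c x < ε :=
      dynDist_iter_control f m hm hε hδ0 hδ n c x hd
    exact lt_of_le_of_lt (dynDist_mono_n f (Nat.le_mul_of_pos_left n (by omega)) c x) h1
  · exact coverSet_nonempty (f^[m]) (hf.iterate m) n hδ0

lemma hpol_iterate_le {X : Type*} [MetricSpace X] [CompactSpace X] (f : X → X)
    (hf : Continuous f) (m : ℕ) (hm : 1 ≤ m) : hpol (f^[m]) ≤ hpol f := by
  rw [hpol, hpol]
  apply iSup_le
  rintro ⟨ε, hε⟩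
  set C : ℕ → ℕ := fun n => coverNum f n ε with hC
  set L : ENNReal := Filter.limsup
      (fun n : ℕ => ENNReal.ofReal (Real.log (C n) / Real.log n)) Filter.atTop with hLdef
  have hL : L ≤ ⨆ e : {e : ℝ // 0 < e},
      Filter.limsup
        (fun n : ℕ => ENNReal.ofReal (Real.log (coverNum f n (e : ℝ)) / Real.log n))
        Filter.atTop := by
    rw [hLdef, hC]
    exact le_iSup (fun e : {e : ℝ // 0 < e} =>
      Filter.limsup
        (fun n : ℕ => ENNReal.ofReal (Real.log (coverNum f n (e : ℝ)) / Real.log n))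
        Filter.atTop) (⟨ε, hε⟩ : {e : ℝ // 0 < e})
  refine le_trans ?_ hL
  -- pointwise bound by g n := ofReal (log (C (m*n)) / log n)
  have hpt : ∀ n : ℕ, ENNReal.ofReal (Real.log (coverNum (f^[m]) n ε) / Real.log n) ≤
      ENNReal.ofReal (Real.log (C (m * n)) / Real.log n) := by
    intro n
    apply ENNReal.ofReal_le_ofReal
    apply div_log_mono
    apply coverNum_le_of_imp
    · intro c x hd
      exact lt_of_le_of_lt (dynDist_iterate_le f m n hm c x) hd
    · exact coverSet_nonempty f hf (m * n) hε
  refine le_trans (Filter.limsup_le_limsup (Eventually.of_forall hpt) (by isBoundedDefault)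
    (by isBoundedDefault)) ?_
  set A : ENNReal := Filter.limsup
      (fun n : ℕ => ENNReal.ofReal (Real.log (C (m * n)) / Real.log n)) Filter.atTop with hA
  by_contra hcon
  push_neg at hcon
  obtain ⟨c, hLc, hcA⟩ := exists_between hcon
  obtain ⟨c', hLc', hc'c⟩ := exists_between hLc
  have hc_top : c ≠ ⊤ := hcA.ne_top
  have hc'_top : c' ≠ ⊤ := hc'c.ne_top
  set r : ℝ := c.toReal
  set r' : ℝ := c'.toReal
  have hr'pos : 0 < r' := ENNReal.toReal_pos (pos_of_gt hLc').ne' hc'_top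
  have hrr' : r' < r := (ENNReal.toReal_lt_toReal hc'_top hc_top).mpr hc'c
  have hev1 : ∀ᶠ n : ℕ in atTop,
      ENNReal.ofReal (Real.log (C n) / Real.log n) < c' :=
    Filter.eventually_lt_of_limsup_lt hLc'
  have hev2 : ∀ᶠ k : ℕ in atTop, Real.log (C k) ≤ r' * Real.log k := by
    filter_upwards [hev1, eventually_ge_atTop 2] with k hk h2
    have hlogk : 0 < Real.log k := Real.log_pos (by exact_mod_cast h2)
    have hlt : Real.log (C k) / Real.log k < r' := by
      by_contra hge
      push_neg at hge
      have h3 : c' ≤ ENNReal.ofReal (Real.log (C k) / Real.log k) := by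
        rw [← ENNReal.ofReal_toReal hc'_top]
        exact ENNReal.ofReal_le_ofReal hge
      exact absurd hk (not_lt.mpr h3)
    calc Real.log (C k) = (Real.log (C k) / Real.log k) * Real.log k := by
          field_simp
      _ ≤ r' * Real.log k := mul_le_mul_of_nonneg_right hlt.le hlogk.le
  obtain ⟨N, hN⟩ := eventually_atTop.mp hev2
  have hev3 : ∀ᶠ n : ℕ in atTop, r' * Real.log m ≤ (r - r') * Real.log n := by
    have ht : Tendsto (fun n : ℕ => (r - r') * Real.log n) atTop atTop :=
      (Real.tendsto_log_atTop.comp tendsto_natCast_atTop_atTop).const_mul_atTop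
        (by linarith)
    exact ht.eventually_ge_atTop _
  have hfin : ∀ᶠ n : ℕ in atTop,
      ENNReal.ofReal (Real.log (C (m * n)) / Real.log n) ≤ c := by
    filter_upwards [eventually_ge_atTop (max N 2), hev3] with n hn hn3
    have hnN : N ≤ n := le_trans (le_max_left _ _) hn
    have hn2 : 2 ≤ n := le_trans (le_max_right _ _) hn
    have hlogn : 0 < Real.log n := Real.log_pos (by exact_mod_cast hn2)
    have hmn : N ≤ m * n := le_trans hnN (Nat.le_mul_of_pos_left n (by omega))
    have h1 : Real.log (C (m * n)) ≤ r' * Real.log ((m : ℝ) * (n : ℝ)) := by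
      have := hN _ hmn
      push_cast at this ⊢
      exact this
    have h2 : Real.log (C (m * n)) ≤ r * Real.log n := by
      rw [Real.log_mul (Nat.cast_ne_zero.mpr (by omega)) (Nat.cast_ne_zero.mpr (by omega))] at h1
      nlinarith
    have h3 : Real.log (C (m * n)) / Real.log n ≤ r :=
      (div_le_iff₀ hlogn).mpr (by linarith [h2])
    calc ENNReal.ofReal (Real.log (C (m * n)) / Real.log n) ≤ ENNReal.ofReal r :=
          ENNReal.ofReal_le_ofReal h3
      _ = c := ENNReal.ofReal_toReal hc_top
  have : A ≤ c := Filter.limsup_le_of_le (by isBoundedDefault) hfin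
  exact absurd hcA (not_lt.mpr this)

/-- For a continuous map on a compact metric space and any `m ≥ 1`, `h_pol(f^m) = h_pol(f)`. -/
theorem stmt5 {X : Type*} [MetricSpace X] [CompactSpace X] (f : X → X) (hf : Continuous f)
    (m : ℕ) (hm : 1 ≤ m) :
    hpol (f^[m]) = hpol f :=
  le_antisymm (hpol_iterate_le f hf m hm) (hpol_le_iterate f hf m hm)
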